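/- Let Q₀ be a probability measure on ℝ^d whose support is contained in the closed ball of radius R centered at the origin, and let σ > 0. Define q_σ(x) := ∫_{ℝ^d} exp(−|x−y|²/(2σ²)) dQ₀(y) and g(x) := log q_σ(x) + |x|²/(2σ²). Then g is differentiable on ℝ^d and for every x, |∇g(x)| ≤ R/σ². (Gradient bound of Theorem 3.8 for the Gaussian smoothing of a bounded-support distribution.) -/

import Mathlib

open MeasureTheory Real
open scoped RealInnerProductSpace

noncomputable section

set_option maxHeartbeats 1000000 in
set_option synthInstance.maxHeartbeats 400000 in
/-- Gradient bound of Theorem 3.8 for the Gaussian smoothing of a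
bounded-support distribution. -/
theorem stmt4 {d : ℕ}
    (Q₀ : Measure (EuclideanSpace ℝ (Fin d))) [IsProbabilityMeasure Q₀]
    (R σ : ℝ) (hσ : 0 < σ)
    (hsupp : Q₀ (Metric.closedBall (0 : EuclideanSpace ℝ (Fin d)) R)ᶜ = 0)
    (qσ g : EuclideanSpace ℝ (Fin d) → ℝ)
    (hq : ∀ x, qσ x = ∫ y, Real.exp (-‖x - y‖ ^ 2 / (2 * σ ^ 2)) ∂Q₀)
    (hg : ∀ x, g x = Real.log (qσ x) + ‖x‖ ^ 2 / (2 * σ ^ 2)) :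
    Differentiable ℝ g ∧ ∀ x, ‖gradient g x‖ ≤ R / σ ^ 2 := by
  have hσ2 : (0:ℝ) < σ ^ 2 := by positivity
  set w : EuclideanSpace ℝ (Fin d) → EuclideanSpace ℝ (Fin d) → ℝ :=
    fun x y => Real.exp (⟪x, y⟫ / σ ^ 2 - ‖y‖ ^ 2 / (2 * σ ^ 2)) with hw
  set F : EuclideanSpace ℝ (Fin d) → ℝ := fun x => ∫ y, w x y ∂Q₀ with hF
  set D : EuclideanSpace ℝ (Fin d) → (EuclideanSpace ℝ (Fin d) →L[ℝ] ℝ) :=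
    fun x => ∫ y, (w x y) • ((σ ^ 2)⁻¹ • (innerSL ℝ y)) ∂Q₀ with hD
  have hae : ∀ᵐ y ∂Q₀, ‖y‖ ≤ R := by
    have h1 : ∀ᵐ y ∂Q₀, y ∈ Metric.closedBall (0 : EuclideanSpace ℝ (Fin d)) R :=
      MeasureTheory.mem_ae_iff.mpr hsupp
    filter_upwards [h1] with y hy
    simpa [Metric.mem_closedBall, dist_zero_right] using hy
  have hR : 0 ≤ R := by
    by_contra h
    push_neg at h
    rw [Metric.closedBall_eq_empty.2 h, Set.compl_empty] at hsupp
    simp [measure_univ] at hsupp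
  have w_pos : ∀ x y, 0 < w x y := fun x y => Real.exp_pos _
  have cont_w : ∀ x, Continuous (w x) := by
    intro x
    apply Real.continuous_exp.comp
    have hcont : Continuous fun y : EuclideanSpace ℝ (Fin d) => ⟪x, y⟫ :=
      (innerSL ℝ x).continuous
    exact (hcont.div_const _).sub ((continuous_norm.pow 2).div_const _)
  have w_le : ∀ (x y : EuclideanSpace ℝ (Fin d)), ‖y‖ ≤ R →
      w x y ≤ Real.exp (‖x‖ * R / σ ^ 2) := by
    intro x y hy
    apply Real.exp_le_exp.2
    have h1 : ⟪x, y⟫ ≤ ‖x‖ * R := by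
      refine le_trans (real_inner_le_norm x y) ?_
      exact mul_le_mul_of_nonneg_left hy (norm_nonneg x)
    have h2 : (0:ℝ) ≤ ‖y‖ ^ 2 / (2 * σ ^ 2) := by positivity
    have h3 : ⟪x, y⟫ / σ ^ 2 ≤ ‖x‖ * R / σ ^ 2 := by gcongr
    linarith
  have int_w : ∀ x, Integrable (w x) Q₀ := by
    intro x
    refine (integrable_const (Real.exp (‖x‖ * R / σ ^ 2))).mono'
      (cont_w x).aestronglyMeasurable ?_
    filter_upwards [hae] with y hy
    rw [Real.norm_eq_abs, abs_of_pos (w_pos x y)]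
    exact w_le x y hy
  have F_pos : ∀ x, 0 < F x := by
    intro x
    rw [hF]
    rw [integral_pos_iff_support_of_nonneg (fun y => (w_pos x y).le) (int_w x)]
    have : Function.support (w x) = Set.univ := by
      ext y; simp [(w_pos x y).ne']
    rw [this]
    simp [measure_univ]
  have hDF : ∀ x, HasFDerivAt F (D x) x := by
    intro x₀
    rw [hF, hD]
    show HasFDerivAt (fun x => ∫ y, w x y ∂Q₀)
      (∫ y, w x₀ y • ((σ ^ 2)⁻¹ • innerSL ℝ y) ∂Q₀) x₀
    refine hasFDerivAt_integral_of_dominated_of_fderiv_le (𝕜 := ℝ)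
      (F' := fun x y => w x y • ((σ ^ 2)⁻¹ • innerSL ℝ y))
      (bound := fun _ => (R / σ ^ 2) * Real.exp ((‖x₀‖ + 1) * R / σ ^ 2))
      (Metric.ball_mem_nhds x₀ one_pos)
      (Filter.Eventually.of_forall fun x => (cont_w x).aestronglyMeasurable)
      (int_w x₀) ?_ ?_ (integrable_const _) ?_
    · exact ((cont_w x₀).smul ((continuous_const (y := (σ ^ 2)⁻¹)).smul (innerSL ℝ
        (E := EuclideanSpace ℝ (Fin d))).continuous)).aestronglyMeasurable
    · filter_upwards [hae] with y hy x hx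
      have hx' : ‖x‖ ≤ ‖x₀‖ + 1 := by
        have := mem_ball_iff_norm.mp hx
        have h2 : ‖x‖ ≤ ‖x - x₀‖ + ‖x₀‖ := by
          simpa using norm_add_le (x - x₀) x₀
        linarith
      have hw1 : w x y ≤ Real.exp ((‖x₀‖ + 1) * R / σ ^ 2) := by
        refine (w_le x y hy).trans (Real.exp_le_exp.2 ?_)
        gcongr
      rw [norm_smul (β := EuclideanSpace ℝ (Fin d) →L[ℝ] ℝ) (w x y),
        norm_smul (β := EuclideanSpace ℝ (Fin d) →L[ℝ] ℝ) ((σ ^ 2)⁻¹),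
        innerSL_apply_norm, Real.norm_eq_abs, Real.norm_eq_abs,
        abs_of_pos (w_pos x y), abs_of_nonneg (inv_nonneg.2 hσ2.le)]
      calc w x y * ((σ ^ 2)⁻¹ * ‖y‖) ≤ Real.exp ((‖x₀‖ + 1) * R / σ ^ 2) * ((σ ^ 2)⁻¹ * R) := by
            have h0 : (0:ℝ) ≤ (σ ^ 2)⁻¹ * ‖y‖ := by positivity
            apply mul_le_mul hw1 (by gcongr) h0 (Real.exp_pos _).le
        _ = R / σ ^ 2 * Real.exp ((‖x₀‖ + 1) * R / σ ^ 2) := by ring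
    · filter_upwards with y x _
      have h1 : HasFDerivAt (fun x : EuclideanSpace ℝ (Fin d) => ⟪y, x⟫)
          (innerSL ℝ y) x := (innerSL ℝ y).hasFDerivAt
      have h2 := ((h1.const_mul ((σ ^ 2)⁻¹)).sub_const (‖y‖ ^ 2 / (2 * σ ^ 2))).exp
      have key : (fun x : EuclideanSpace ℝ (Fin d) =>
          Real.exp ((σ ^ 2)⁻¹ * ⟪y, x⟫ - ‖y‖ ^ 2 / (2 * σ ^ 2))) = fun x => w x y := by
        funext x
        rw [hw]
        simp only [real_inner_comm y x, div_eq_inv_mul]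
      have keyv : Real.exp ((σ ^ 2)⁻¹ * ⟪y, x⟫ - ‖y‖ ^ 2 / (2 * σ ^ 2)) = w x y := by
        rw [hw]; simp only [real_inner_comm y x, div_eq_inv_mul]
      rw [key, keyv] at h2
      exact h2
  have hqF : ∀ x, qσ x = Real.exp (-‖x‖ ^ 2 / (2 * σ ^ 2)) * F x := by
    intro x
    simp only [hq, hF]
    rw [← MeasureTheory.integral_const_mul]
    congr 1
    funext y
    rw [hw, ← Real.exp_add]
    congr 1
    rw [norm_sub_sq_real x y]
    field_simp
    ring
  have hgF : ∀ x, g x = Real.log (F x) := by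
    intro x
    rw [hg, hqF, Real.log_mul (Real.exp_ne_zero _) (F_pos x).ne', Real.log_exp]
    ring
  have hgd : ∀ x, HasFDerivAt g ((F x)⁻¹ • D x) x := by
    intro x
    have h1 : HasFDerivAt (fun x => Real.log (F x)) ((F x)⁻¹ • D x) x :=
      (hDF x).log (F_pos x).ne'
    have hfun : g = fun x => Real.log (F x) := funext hgF
    rw [hfun]
    exact h1
  refine ⟨fun x => (hgd x).differentiableAt, fun x => ?_⟩
  have hnorm : ‖gradient g x‖ = ‖fderiv ℝ g x‖ := by
    rw [gradient]
    exact (InnerProductSpace.toDual ℝ _).symm.norm_map _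
  rw [hnorm, (hgd x).fderiv]
  have hDle : ‖D x‖ ≤ R / σ ^ 2 * F x := by
    simp only [hD, hF]
    rw [← MeasureTheory.integral_const_mul]
    refine norm_integral_le_of_norm_le ((int_w x).const_mul _) ?_
    filter_upwards [hae] with y hy
    have hnsm : ‖w x y • ((σ ^ 2)⁻¹ • (innerSL ℝ y))‖ = w x y * ((σ ^ 2)⁻¹ * ‖y‖) := by
      rw [norm_smul (β := EuclideanSpace ℝ (Fin d) →L[ℝ] ℝ) (w x y),
        norm_smul (β := EuclideanSpace ℝ (Fin d) →L[ℝ] ℝ) ((σ ^ 2)⁻¹),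
        innerSL_apply_norm, Real.norm_eq_abs, Real.norm_eq_abs,
        abs_of_pos (w_pos x y), abs_of_nonneg (inv_nonneg.2 hσ2.le)]
    rw [hnsm]
    calc w x y * ((σ ^ 2)⁻¹ * ‖y‖) ≤ w x y * ((σ ^ 2)⁻¹ * R) := by
          have := (w_pos x y).le
          gcongr
      _ = R / σ ^ 2 * w x y := by ring
  rw [norm_smul, Real.norm_eq_abs, abs_of_nonneg (inv_nonneg.2 (F_pos x).le)]
  calc (F x)⁻¹ * ‖D x‖ ≤ (F x)⁻¹ * (R / σ ^ 2 * F x) := by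
        have := (F_pos x).le
        gcongr
    _ = R / σ ^ 2 := by
        field_simp
        rw [mul_comm, mul_div_assoc, div_self (F_pos x).ne', mul_one]
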